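/- Let α ∈ [0, π/2) and θ' ∈ (−π/2 + α, π/2 − α). Then cos α − sin θ' > 0 and cos(α − θ') > 0, and θ'' := log( (cos α − sin θ') / cos(α − θ') ) satisfies the constant-phase equation cos θ' · cosh θ'' + tan α · sin θ' · sinh θ'' = 1. -/

import Mathlib

open Real

/-- Closed-form solution of the steepest-descent (constant-phase) contour equation: for a loss
angle `α ∈ [0, π/2)` and `θ' ∈ (-π/2 + α, π/2 - α)`, both `cos α - sin θ'` and `cos(α - θ')`
are positive, and `θ'' = log((cos α - sin θ')/cos(α - θ'))` satisfies
`cos θ' cosh θ'' + tan α · sin θ' sinh θ'' = 1`. -/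
theorem stmt10 (α : ℝ) (hα : α ∈ Set.Ico 0 (Real.pi / 2)) (θ' : ℝ)
    (hθ' : θ' ∈ Set.Ioo (-(Real.pi / 2) + α) (Real.pi / 2 - α)) :
    0 < Real.cos α - Real.sin θ' ∧ 0 < Real.cos (α - θ') ∧
      Real.cos θ' * Real.cosh (Real.log ((Real.cos α - Real.sin θ') / Real.cos (α - θ'))) +
          Real.tan α * Real.sin θ' *
            Real.sinh (Real.log ((Real.cos α - Real.sin θ') / Real.cos (α - θ'))) = 1 := by
  obtain ⟨hα0, hα2⟩ := hα
  obtain ⟨hl, hr⟩ := hθ'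
  have hpi := Real.pi_pos
  have hθlo : -(Real.pi / 2) < θ' := by linarith
  have hθhi : θ' < Real.pi / 2 := by linarith
  have h1 : Real.sin θ' < Real.sin (Real.pi / 2 - α) := by
    apply Real.strictMonoOn_sin ⟨le_of_lt hθlo, le_of_lt hθhi⟩
      ⟨by linarith, by linarith⟩ (by linarith)
  rw [Real.sin_pi_div_two_sub] at h1
  have h1' : 0 < Real.cos α - Real.sin θ' := by linarith
  have h2 : 0 < Real.cos (α - θ') :=
    Real.cos_pos_of_mem_Ioo ⟨by linarith, by linarith⟩
  refine ⟨h1', h2, ?_⟩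
  have hr0 : 0 < (Real.cos α - Real.sin θ') / Real.cos (α - θ') := div_pos h1' h2
  rw [Real.cosh_eq, Real.sinh_eq, Real.exp_neg, Real.exp_log hr0]
  have hcα : 0 < Real.cos α := Real.cos_pos_of_mem_Ioo ⟨by linarith, hα2⟩
  rw [Real.tan_eq_sin_div_cos, Real.cos_sub]
  have hD : Real.cos α * Real.cos θ' + Real.sin α * Real.sin θ' > 0 := by
    rw [Real.cos_sub] at h2; linarith
  have hs : Real.sin α ^ 2 + Real.cos α ^ 2 = 1 := Real.sin_sq_add_cos_sq α
  have ht : Real.sin θ' ^ 2 + Real.cos θ' ^ 2 = 1 := Real.sin_sq_add_cos_sq θ'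
  have hD' : Real.cos θ' * Real.cos α + Real.sin θ' * Real.sin α ≠ 0 := by linarith
  field_simp
  linear_combination (-(Real.cos θ' * Real.cos α * Real.sin θ' ^ 2 + Real.sin θ' ^ 3 * Real.sin α)) * hs + (Real.cos θ' * Real.cos α ^ 3 + Real.sin θ' * Real.sin α * Real.cos α ^ 2) * ht
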